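/- The explicit homoclinic curve lies on the separatrix level Ĝ₀ = δ: let Λ > 0, 0 < δ < 1, t₀ ∈ ℝ, and set σ = √(δ(2 − δ)), β = √(2 − δ). For t ∈ ℝ put τ = σΛ(t − t₀), G(t) = σΛ/cosh τ, and C(t) = (1 − β²/cosh²τ)/√(1 − σ²/cosh²τ). Then for all t: (i) 0 < 1 − σ²/cosh²τ, (ii) |C(t)| ≤ 1 (so C(t) = cos g(t) for a well-defined angle g(t)), and (iii) G(t)²/Λ² + δ·√(1 − G(t)²/Λ²)·C(t) = δ. -/

import Mathlib

/-- the explicit homoclinic curve lies on the separatrix level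
`Ĝ₀ = δ`: with `σ = √(δ(2−δ))`, `β = √(2−δ)`, `τ = σΛ(t−t₀)`,
`G(t) = σΛ/cosh τ` and `C(t) = (1 − β²/cosh²τ)/√(1 − σ²/cosh²τ)`, one has
(i) `0 < 1 − σ²/cosh²τ`, (ii) `|C(t)| ≤ 1` (so `C(t) = cos g(t)` for a
well-defined angle `g(t)`), and (iii) `G(t)²/Λ² + δ √(1 − G(t)²/Λ²) C(t) = δ`. -/
theorem homoclinic_on_separatrix (Λ δ t₀ : ℝ) (hΛ : 0 < Λ) (hδ0 : 0 < δ) (hδ1 : δ < 1) :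
    let σ := Real.sqrt (δ * (2 - δ))
    let β := Real.sqrt (2 - δ)
    ∀ t : ℝ,
      let τ := σ * Λ * (t - t₀)
      let G := σ * Λ / Real.cosh τ
      let C := (1 - β ^ 2 / Real.cosh τ ^ 2) / Real.sqrt (1 - σ ^ 2 / Real.cosh τ ^ 2)
      0 < 1 - σ ^ 2 / Real.cosh τ ^ 2 ∧
      |C| ≤ 1 ∧ (∃ g : ℝ, Real.cos g = C) ∧
      G ^ 2 / Λ ^ 2 + δ * Real.sqrt (1 - G ^ 2 / Λ ^ 2) * C = δ := by
  intro σ β t τ G C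
  have h2δ : (0:ℝ) < 2 - δ := by linarith
  have hσ2 : σ ^ 2 = δ * (2 - δ) := Real.sq_sqrt (by positivity)
  have hβ2 : β ^ 2 = 2 - δ := Real.sq_sqrt (by positivity)
  have hc : 1 ≤ Real.cosh τ := Real.one_le_cosh τ
  have hc2 : 1 ≤ Real.cosh τ ^ 2 := by nlinarith
  have hc2pos : 0 < Real.cosh τ ^ 2 := by linarith
  have hσlt : σ ^ 2 < 1 := by nlinarith
  have hdiv : σ ^ 2 / Real.cosh τ ^ 2 ≤ σ ^ 2 := by
    rw [div_le_iff₀ hc2pos]; nlinarith [Real.sq_sqrt (show (0:ℝ) ≤ δ * (2 - δ) by positivity)]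
  have hi : 0 < 1 - σ ^ 2 / Real.cosh τ ^ 2 := by linarith
  set s := Real.sqrt (1 - σ ^ 2 / Real.cosh τ ^ 2) with hs_def
  have hs : 0 < s := Real.sqrt_pos.mpr hi
  have hs2 : s ^ 2 = 1 - σ ^ 2 / Real.cosh τ ^ 2 := Real.sq_sqrt (le_of_lt hi)
  -- key inequality : N² ≤ s²
  set N := 1 - β ^ 2 / Real.cosh τ ^ 2 with hN_def
  have hkey : N ^ 2 ≤ s ^ 2 := by
    rw [hs2, hN_def, hβ2, hσ2]
    set a := (2 - δ) / Real.cosh τ ^ 2 with ha_def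
    have ha0 : 0 ≤ a := by positivity
    have ha1 : a ≤ 2 - δ := by
      rw [ha_def, div_le_iff₀ hc2pos]; nlinarith
    have : δ * (2 - δ) / Real.cosh τ ^ 2 = δ * a := by rw [ha_def]; ring
    rw [this]
    nlinarith
  have hC2 : C ^ 2 ≤ 1 := by
    have : C ^ 2 = N ^ 2 / s ^ 2 := by rw [div_pow]
    rw [this, div_le_one (by positivity)]
    exact hkey
  have habs : |C| ≤ 1 := (sq_le_one_iff_abs_le_one C).mp hC2
  refine ⟨hi, habs, ⟨Real.arccos C, Real.cos_arccos (abs_le.mp habs).1 (abs_le.mp habs).2⟩, ?_⟩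
  have hchpos : 0 < Real.cosh τ := lt_of_lt_of_le one_pos hc
  have hG : G ^ 2 / Λ ^ 2 = σ ^ 2 / Real.cosh τ ^ 2 := by
    field_simp [G]
    simp only [G]; rw [div_pow, div_mul_cancel₀ _ (ne_of_gt hc2pos)]; ring
  rw [hG, ← hs_def]
  have hCs : s * C = N := by
    rw [mul_div_cancel₀ _ (ne_of_gt hs)]
  have : δ * s * C = δ * N := by rw [mul_assoc, hCs]
  rw [this, hN_def, hβ2, hσ2]
  field_simp
  ring
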